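/- For every δ > 0 and natural number n ≥ 1, ∫₀^δ ((1 + e^{-t})/2)^n dt ≤ (1/n)·(2δ/(1 - e^{-δ})). -/

import Mathlib

open Real

theorem stmt_4 (δ : ℝ) (hδ : 0 < δ) (n : ℕ) (hn : 1 ≤ n) :
    ∫ t in (0:ℝ)..δ, ((1 + Real.exp (-t)) / 2) ^ n
      ≤ (1 / (n : ℝ)) * (2 * δ / (1 - Real.exp (-δ))) := by
  have hden : 0 < 1 - Real.exp (-δ) := by
    have : Real.exp (-δ) < 1 := Real.exp_lt_one_iff.mpr (by linarith)
    linarith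
  have hn' : (0:ℝ) < n := by exact_mod_cast hn
  set c : ℝ := (n : ℝ) * (1 - Real.exp (-δ)) / (2 * δ) with hc
  have hcpos : 0 < c := by positivity
  -- pointwise bound
  have key : ∀ t ∈ Set.Icc (0:ℝ) δ,
      ((1 + Real.exp (-t)) / 2) ^ n ≤ Real.exp (-(c * t)) := by
    intro t ht
    obtain ⟨ht0, htδ⟩ := ht
    -- convexity of exp: exp(-t) ≤ (1 - t/δ) + (t/δ) exp(-δ)
    have hconv : Real.exp (-t) ≤ (1 - t / δ) + (t / δ) * Real.exp (-δ) := by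
      have ha : (0:ℝ) ≤ 1 - t / δ := by
        have : t / δ ≤ 1 := (div_le_one hδ).mpr htδ
        linarith
      have hb : (0:ℝ) ≤ t / δ := by positivity
      have hab : (1 - t / δ) + t / δ = 1 := by ring
      have h := convexOn_exp.2 (Set.mem_univ (0:ℝ)) (Set.mem_univ (-δ)) ha hb hab
      have hd : δ * (t / δ) = t := by field_simp
      simpa [Real.exp_zero, smul_eq_mul, mul_comm, hd] using h
    -- hence δ (1 - e^{-t}) ≥ t (1 - e^{-δ})
    have hlin : t * (1 - Real.exp (-δ)) ≤ δ * (1 - Real.exp (-t)) := by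
      have h := hconv
      rw [div_eq_mul_inv] at h
      have h2 : δ * Real.exp (-t) ≤ δ - t + t * Real.exp (-δ) := by
        have := mul_le_mul_of_nonneg_left h hδ.le
        field_simp at this
        nlinarith [this]
      nlinarith
    -- step 1 : (1+e^{-t})/2 ≤ exp(-(1-e^{-t})/2)
    have hstep : (1 + Real.exp (-t)) / 2 ≤ Real.exp (-((1 - Real.exp (-t)) / 2)) := by
      have := Real.add_one_le_exp (-((1 - Real.exp (-t)) / 2))
      linarith
    have hbase : (0:ℝ) ≤ (1 + Real.exp (-t)) / 2 := by positivity
    have hpow : ((1 + Real.exp (-t)) / 2) ^ n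
        ≤ Real.exp (-((1 - Real.exp (-t)) / 2)) ^ n :=
      pow_le_pow_left₀ hbase hstep n
    have hexp : Real.exp (-((1 - Real.exp (-t)) / 2)) ^ n
        = Real.exp ((n : ℝ) * (-((1 - Real.exp (-t)) / 2))) := by
      rw [← Real.exp_nat_mul]
    rw [hexp] at hpow
    refine hpow.trans (Real.exp_le_exp.mpr ?_)
    rw [hc]
    have hq : (n:ℝ) * (1 - Real.exp (-δ)) / (2 * δ) * t
        ≤ (n:ℝ) * ((1 - Real.exp (-t)) / 2) := by
      rw [div_mul_eq_mul_div, div_le_iff₀ (by positivity)]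
      nlinarith [mul_le_mul_of_nonneg_left hlin hn'.le]
    nlinarith
  -- integrability
  have hi1 : IntervalIntegrable (fun t => ((1 + Real.exp (-t)) / 2) ^ n)
      MeasureTheory.volume 0 δ := (Continuous.intervalIntegrable (by continuity) _ _)
  have hi2 : IntervalIntegrable (fun t => Real.exp (-(c * t)))
      MeasureTheory.volume 0 δ := (Continuous.intervalIntegrable (by continuity) _ _)
  have hmono := intervalIntegral.integral_mono_on hδ.le hi1 hi2 key
  refine hmono.trans ?_
  -- compute the exponential integral
  have hderiv : ∀ t ∈ Set.uIcc (0:ℝ) δ,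
      HasDerivAt (fun t => -Real.exp (-(c * t)) / c) (Real.exp (-(c * t))) t := by
    intro t _
    have h1 : HasDerivAt (fun t : ℝ => -(c * t)) (-c) t := by
      have := ((hasDerivAt_id' t).const_mul c).neg
      simp only [mul_one] at this
      exact this
    have h2 := (Real.hasDerivAt_exp (-(c * t))).comp t h1
    have h3 := (h2.neg).div_const c
    refine h3.congr_deriv ?_
    rw [div_eq_iff hcpos.ne']; ring
  have hval : ∫ t in (0:ℝ)..δ, Real.exp (-(c * t))
      = -Real.exp (-(c * δ)) / c - (-Real.exp (-(c * 0)) / c) :=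
    intervalIntegral.integral_eq_sub_of_hasDerivAt hderiv hi2
  rw [hval]
  have hle : -Real.exp (-(c * δ)) / c - (-Real.exp (-(c * 0)) / c) ≤ 1 / c := by
    have h1 : 0 < Real.exp (-(c * δ)) := Real.exp_pos _
    simp only [mul_zero, neg_zero, Real.exp_zero]
    have heq : -Real.exp (-(c * δ)) / c - -1 / c = (1 - Real.exp (-(c * δ))) / c := by
      ring
    rw [heq]
    gcongr
    linarith
  refine hle.trans (le_of_eq ?_)
  rw [hc]
  field_simp
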